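/- Let N ≥ 1 and let M be a symmetric N×N real matrix all of whose entries are integers, with |M_{ij}| ≤ B for all i, j, where B ≥ 1 is an integer. Then every nonzero real eigenvalue μ of M (i.e., M v = μ v for some nonzero vector v and μ ≠ 0) satisfies |μ| ≥ (B·N)^{−N}. -/

import Mathlib

open Polynomial Finset

lemma aux_coeff_prod (B : ℤ) (hB : 0 ≤ B) (m : Multiset ℤ)
    (hm : ∀ c ∈ m, |c| ≤ B) (i : ℕ) :
    |((m.map fun c => (X : ℤ[X]) + C c).prod).coeff i| ≤
      ((Multiset.card m).choose i : ℤ) * B ^ (Multiset.card m - i) := by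
  induction m using Multiset.induction_on generalizing i with
  | empty =>
    simp only [Multiset.map_zero, Multiset.prod_zero, Multiset.card_zero]
    rcases Nat.eq_zero_or_pos i with rfl | hi
    · simp
    · rw [coeff_one, if_neg (by omega)]
      simp [Nat.choose_eq_zero_of_lt hi]
  | cons c m ih =>
    have hc : |c| ≤ B := hm c (Multiset.mem_cons_self c m)
    have hm' : ∀ x ∈ m, |x| ≤ B := fun x hx => hm x (Multiset.mem_cons_of_mem hx)
    set n := Multiset.card m with hn
    set Q := (m.map fun c => (X : ℤ[X]) + C c).prod with hQ
    have hprod : ((c ::ₘ m).map fun c => (X : ℤ[X]) + C c).prod = X * Q + C c * Q := by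
      rw [Multiset.map_cons, Multiset.prod_cons, add_mul]
    rw [hprod, Multiset.card_cons]
    rcases Nat.eq_zero_or_pos i with rfl | hi
    · rw [coeff_add, mul_coeff_zero, coeff_X_zero, zero_mul, zero_add, coeff_C_mul]
      calc |c * Q.coeff 0| = |c| * |Q.coeff 0| := abs_mul _ _
        _ ≤ B * ((n.choose 0 : ℤ) * B ^ (n - 0)) := by
            exact mul_le_mul hc (ih hm' 0) (abs_nonneg _) hB
        _ ≤ ((n+1).choose 0 : ℤ) * B ^ (n + 1 - 0) := by
            simp [pow_succ, mul_comm]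
    · obtain ⟨j, rfl⟩ := Nat.exists_eq_add_of_lt hi
      rw [zero_add] at *
      rw [coeff_add, coeff_X_mul, coeff_C_mul]
      have h1 := ih hm' j
      have h2 := ih hm' (j+1)
      have key : (n.choose (j+1) : ℤ) * (B * B ^ (n - (j+1))) ≤ (n.choose (j+1) : ℤ) * B ^ (n - j) := by
        rcases le_or_gt (j+1) n with h | h
        · have : B * B ^ (n - (j+1)) = B ^ (n - j) := by
            rw [← pow_succ']
            congr 1
            omega
          rw [this]
        · simp [Nat.choose_eq_zero_of_lt h]
      calc |Q.coeff j + c * Q.coeff (j+1)|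
          ≤ |Q.coeff j| + |c| * |Q.coeff (j+1)| := by
            refine (abs_add_le _ _).trans ?_
            rw [abs_mul]
        _ ≤ (n.choose j : ℤ) * B ^ (n - j) + B * ((n.choose (j+1) : ℤ) * B ^ (n - (j+1))) := by
            refine add_le_add h1 (mul_le_mul hc h2 (abs_nonneg _) hB)
        _ ≤ (n.choose j : ℤ) * B ^ (n - j) + (n.choose (j+1) : ℤ) * B ^ (n - j) := by
            refine add_le_add_right ?_ _
            calc B * ((n.choose (j+1) : ℤ) * B ^ (n - (j+1)))
                = (n.choose (j+1) : ℤ) * (B * B ^ (n - (j+1))) := by ring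
              _ ≤ _ := key
        _ = ((n+1).choose (j+1) : ℤ) * B ^ (n + 1 - (j+1)) := by
            rw [Nat.choose_succ_succ, show n + 1 - (j+1) = n - j from by omega]
            push_cast
            ring

set_option maxHeartbeats 1000000 in
lemma aux_perm_prod (N : ℕ) (B : ℤ) (hB : 1 ≤ B) (M₀ : Matrix (Fin N) (Fin N) ℤ)
    (hbnd : ∀ i j, |M₀ i j| ≤ B) (σ : Equiv.Perm (Fin N)) (i : ℕ) (hi : i ≤ N) :
    |(∏ j, M₀.charmatrix (σ j) j).coeff i| ≤
      (((Finset.univ.filter fun j => σ j = j).card.choose i : ℤ)) * B ^ (N - i) := by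
  classical
  set S := Finset.univ.filter fun j => σ j = j with hS
  set f := S.card with hf
  have hsplit : (∏ j, M₀.charmatrix (σ j) j) =
      (∏ j ∈ S, M₀.charmatrix (σ j) j) * ∏ j ∈ Finset.univ.filter (fun j => ¬ σ j = j), M₀.charmatrix (σ j) j :=
    (Finset.prod_filter_mul_prod_filter_not Finset.univ _ _).symm
  have h1 : (∏ j ∈ S, M₀.charmatrix (σ j) j) =
      ((S.val.map fun j => -M₀ j j).map fun c => (X : ℤ[X]) + C c).prod := by
    rw [Multiset.map_map]
    rw [Finset.prod_eq_multiset_prod]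
    congr 1
    refine Multiset.map_congr rfl ?_
    intro j hj
    have hj' : σ j = j := by
      have := Finset.mem_filter.mp (by exact hj : j ∈ S)
      exact this.2
    simp only [Function.comp_apply, hj', Matrix.charmatrix_apply_eq, map_neg, sub_eq_add_neg]
  have h2 : (∏ j ∈ Finset.univ.filter (fun j => ¬ σ j = j), M₀.charmatrix (σ j) j) =
      C (∏ j ∈ Finset.univ.filter (fun j => ¬ σ j = j), (-(M₀ (σ j) j))) := by
    rw [map_prod]
    refine Finset.prod_congr rfl ?_
    intro j hj
    have hj' : σ j ≠ j := (Finset.mem_filter.mp hj).2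
    rw [Matrix.charmatrix_apply_ne _ _ _ hj', map_neg]
  set d := ∏ j ∈ Finset.univ.filter (fun j => ¬ σ j = j), (-(M₀ (σ j) j)) with hd
  have hcard : f + (Finset.univ.filter (fun j => ¬ σ j = j)).card = N := by
    rw [hf, hS, Finset.card_filter_add_card_filter_not]
    simp
  have hdb : |d| ≤ B ^ (N - f) := by
    rw [hd, Finset.abs_prod]
    calc ∏ j ∈ Finset.univ.filter (fun j => ¬ σ j = j), |(-(M₀ (σ j) j))|
        ≤ ∏ j ∈ Finset.univ.filter (fun j => ¬ σ j = j), B := by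
          refine Finset.prod_le_prod (fun _ _ => abs_nonneg _) ?_
          intro j _; rw [abs_neg]; exact hbnd _ _
      _ = B ^ (N - f) := by rw [Finset.prod_const]; congr 1; omega
  have hB0 : (0:ℤ) ≤ B := le_trans zero_le_one hB
  rw [hsplit, h1, h2, coeff_mul_C, abs_mul]
  have hP := aux_coeff_prod B hB0 (S.val.map fun j => -M₀ j j)
    (by intro c hc
        obtain ⟨j, _, rfl⟩ := Multiset.mem_map.mp hc
        rw [abs_neg]; exact hbnd _ _) i
  have hcards : Multiset.card (S.val.map fun j => -M₀ j j) = f := by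
    rw [Multiset.card_map]; rfl
  rw [hcards] at hP
  have step1 : |(((S.val.map fun j => -M₀ j j)).map fun c => (X : ℤ[X]) + C c).prod.coeff i| * |d|
      ≤ ((f.choose i : ℤ) * B ^ (f - i)) * B ^ (N - f) :=
    mul_le_mul hP hdb (abs_nonneg _)
      (mul_nonneg (Int.natCast_nonneg _) (pow_nonneg hB0 _))
  refine step1.trans ?_
  rcases le_or_gt i f with h | h
  · rw [mul_assoc, ← pow_add, show f - i + (N - f) = N - i from by omega]
  · simp [Nat.choose_eq_zero_of_lt h]

lemma aux_fix_card (N : ℕ) (s : Finset (Fin N)) :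
    (Finset.univ.filter fun σ : Equiv.Perm (Fin N) => ∀ x ∈ s, σ x = x).card ≤
      Nat.factorial (N - s.card) := by
  classical
  have hmap : ∀ σ : Equiv.Perm (Fin N), (∀ x ∈ s, σ x = x) →
      ∀ x : Fin N, (x ∉ s ↔ σ x ∉ s) := by
    intro σ hσ x
    constructor
    · intro hx hcon
      have h1 : σ (σ x) = σ x := hσ _ hcon
      have h2 : σ x = x := σ.injective h1
      exact hx (h2 ▸ hcon)
    · intro hx
      by_contra hxs
      exact hx (by rw [hσ x hxs]; exact hxs)
  set F : Equiv.Perm (Fin N) → Equiv.Perm {x : Fin N // x ∉ s} :=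
    fun σ => if h : ∀ x : Fin N, (x ∉ s ↔ σ x ∉ s) then σ.subtypePerm (fun x => (h x).symm) else 1 with hF
  have hle : (Finset.univ.filter fun σ : Equiv.Perm (Fin N) => ∀ x ∈ s, σ x = x).card ≤
      (Finset.univ : Finset (Equiv.Perm {x : Fin N // x ∉ s})).card := by
    refine Finset.card_le_card_of_injOn F (fun _ _ => Finset.mem_univ _) ?_
    intro σ hσ τ hτ heq
    have hσ' := (Finset.mem_filter.mp hσ).2
    have hτ' := (Finset.mem_filter.mp hτ).2
    rw [hF] at heq
    simp only [dif_pos (hmap σ hσ'), dif_pos (hmap τ hτ')] at heq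
    refine Equiv.ext fun x => ?_
    by_cases hx : x ∈ s
    · rw [hσ' x hx, hτ' x hx]
    · have h3 : σ.subtypePerm (fun x => (hmap σ hσ' x).symm) ⟨x, hx⟩ = τ.subtypePerm (fun x => (hmap τ hτ' x).symm) (⟨x, hx⟩ : {x : Fin N // x ∉ s}) := by
        rw [heq]
      rw [Equiv.Perm.subtypePerm_apply, Equiv.Perm.subtypePerm_apply, Subtype.mk.injEq] at h3
      exact h3
  refine hle.trans ?_
  rw [Finset.card_univ, Fintype.card_perm]
  have : Fintype.card {x : Fin N // x ∉ s} = N - s.card := by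
    rw [Fintype.card_subtype_compl]
    congr 1
    · exact Fintype.card_fin N
    · exact Fintype.card_coe s
  rw [this]

lemma aux_count (N i : ℕ) (hi : i ≤ N) :
    ∑ σ : Equiv.Perm (Fin N), ((Finset.univ.filter fun j => σ j = j).card.choose i)
      ≤ N ^ (N - i) := by
  classical
  have h1 : ∀ σ : Equiv.Perm (Fin N),
      ((Finset.univ.filter fun j => σ j = j).card.choose i) =
      ((Finset.univ.powersetCard i).filter
        (fun s => s ⊆ Finset.univ.filter fun j => σ j = j)).card := by
    intro σ
    rw [← Finset.card_powersetCard]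
    congr 1
    ext t
    simp only [Finset.mem_powersetCard, Finset.mem_filter, Finset.mem_powersetCard]
    constructor
    · rintro ⟨h1, h2⟩; exact ⟨⟨Finset.subset_univ _, h2⟩, h1⟩
    · rintro ⟨⟨_, h2⟩, h1⟩; exact ⟨h1, h2⟩
  calc ∑ σ : Equiv.Perm (Fin N), ((Finset.univ.filter fun j => σ j = j).card.choose i)
      = ∑ σ : Equiv.Perm (Fin N), ∑ s ∈ Finset.univ.powersetCard i,
          if s ⊆ Finset.univ.filter (fun j => σ j = j) then 1 else 0 := by
        refine Finset.sum_congr rfl fun σ _ => ?_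
        rw [h1 σ, Finset.card_filter]
    _ = ∑ s ∈ Finset.univ.powersetCard i, ∑ σ : Equiv.Perm (Fin N),
          if s ⊆ Finset.univ.filter (fun j => σ j = j) then 1 else 0 := Finset.sum_comm
    _ ≤ ∑ s ∈ Finset.univ.powersetCard i, Nat.factorial (N - i) := by
        refine Finset.sum_le_sum fun s hs => ?_
        have hsc : s.card = i := (Finset.mem_powersetCard.mp hs).2
        have : ∑ σ : Equiv.Perm (Fin N),
            (if s ⊆ Finset.univ.filter (fun j => σ j = j) then 1 else 0) =
            (Finset.univ.filter fun σ : Equiv.Perm (Fin N) => ∀ x ∈ s, σ x = x).card := by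
          rw [Finset.card_filter]
          refine Finset.sum_congr rfl fun σ _ => ?_
          congr 1
          simp only [eq_iff_iff]
          constructor
          · intro h x hx
            exact (Finset.mem_filter.mp (h hx)).2
          · intro h x hx
            exact Finset.mem_filter.mpr ⟨Finset.mem_univ _, h x hx⟩
        rw [this, ← hsc]
        exact aux_fix_card N s
    _ = (Fintype.card (Fin N)).choose i * Nat.factorial (N - i) := by
        rw [Finset.sum_const, Finset.card_powersetCard, Finset.card_univ, smul_eq_mul]
    _ ≤ N ^ (N - i) := by
        rw [Fintype.card_fin, ← Nat.choose_symm hi, mul_comm,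
          ← Nat.descFactorial_eq_factorial_mul_choose]
        exact Nat.descFactorial_le_pow _ _

lemma aux_charpoly_coeff (N : ℕ) (B : ℤ) (hB : 1 ≤ B) (M₀ : Matrix (Fin N) (Fin N) ℤ)
    (hbnd : ∀ i j, |M₀ i j| ≤ B) (i : ℕ) (hi : i ≤ N) :
    |M₀.charpoly.coeff i| ≤ ((N : ℤ) * B) ^ (N - i) := by
  classical
  rw [Matrix.charpoly, Matrix.det_apply, Polynomial.finset_sum_coeff]
  have hB0 : (0:ℤ) ≤ B := le_trans zero_le_one hB
  calc |∑ σ : Equiv.Perm (Fin N), ((Equiv.Perm.sign σ) • ∏ j, M₀.charmatrix (σ j) j).coeff i|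
      ≤ ∑ σ : Equiv.Perm (Fin N), |((Equiv.Perm.sign σ) • ∏ j, M₀.charmatrix (σ j) j).coeff i| :=
        Finset.abs_sum_le_sum_abs _ _
    _ ≤ ∑ σ : Equiv.Perm (Fin N),
          (((Finset.univ.filter fun j => σ j = j).card.choose i : ℤ)) * B ^ (N - i) := by
        refine Finset.sum_le_sum fun σ _ => ?_
        have habs : |((Equiv.Perm.sign σ) • ∏ j, M₀.charmatrix (σ j) j).coeff i| =
            |(∏ j, M₀.charmatrix (σ j) j).coeff i| := by
          rcases Int.units_eq_one_or (Equiv.Perm.sign σ) with h | h <;>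
            rw [h] <;> simp
        rw [habs]
        exact aux_perm_prod N B hB M₀ hbnd σ i hi
    _ = (∑ σ : Equiv.Perm (Fin N),
          ((Finset.univ.filter fun j => σ j = j).card.choose i : ℤ)) * B ^ (N - i) := by
        rw [← Finset.sum_mul]
    _ ≤ ((N : ℤ)) ^ (N - i) * B ^ (N - i) := by
        refine mul_le_mul_of_nonneg_right ?_ (pow_nonneg hB0 _)
        have := aux_count N i hi
        calc (∑ σ : Equiv.Perm (Fin N),
              ((Finset.univ.filter fun j => σ j = j).card.choose i : ℤ))
            = ((∑ σ : Equiv.Perm (Fin N),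
              ((Finset.univ.filter fun j => σ j = j).card.choose i) : ℕ) : ℤ) := by push_cast; rfl
          _ ≤ (((N : ℕ) ^ (N - i) : ℕ) : ℤ) := by exact_mod_cast this
          _ = (N : ℤ) ^ (N - i) := by push_cast; rfl
    _ = ((N : ℤ) * B) ^ (N - i) := (mul_pow _ _ _).symm

theorem statement1 (N : ℕ) (hN : 1 ≤ N) (B : ℤ) (hB : 1 ≤ B)
    (M : Matrix (Fin N) (Fin N) ℝ) (hsym : M.IsSymm)
    (hint : ∀ i j, ∃ z : ℤ, M i j = (z : ℝ))
    (hbnd : ∀ i j, |M i j| ≤ (B : ℝ))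
    (μ : ℝ) (v : Fin N → ℝ) (hv : v ≠ 0)
    (heig : M.mulVec v = μ • v) (hμ : μ ≠ 0) :
    (((B : ℝ) * (N : ℝ)) ^ N)⁻¹ ≤ |μ| := by
  classical
  haveI : NeZero N := ⟨by omega⟩
  -- integer matrix
  set M₀ : Matrix (Fin N) (Fin N) ℤ := fun i j => (hint i j).choose with hM₀
  have hMij : ∀ i j, M i j = ((M₀ i j : ℤ) : ℝ) := fun i j => (hint i j).choose_spec
  have hmap : M₀.map (Int.cast : ℤ → ℝ) = M := by
    ext i j
    rw [Matrix.map_apply, hMij i j]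
  have hbnd₀ : ∀ i j, |M₀ i j| ≤ B := by
    intro i j
    have h := hbnd i j
    rw [hMij i j, ← Int.cast_abs] at h
    exact_mod_cast h
  set p : ℤ[X] := M₀.charpoly with hp
  have hmonic : p.Monic := M₀.charpoly_monic
  have hp0 : p ≠ 0 := hmonic.ne_zero
  have hdeg : p.natDegree = N := by
    rw [hp, Matrix.charpoly_natDegree_eq_dim, Fintype.card_fin]
  set k := p.natTrailingDegree with hk
  have hkN : k ≤ N := hdeg ▸ p.natTrailingDegree_le_natDegree
  have hak : p.coeff k ≠ 0 := Polynomial.coeff_natTrailingDegree_ne_zero.mpr hp0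
  have hak1 : (1 : ℤ) ≤ |p.coeff k| := Int.one_le_abs (by exact_mod_cast hak)
  -- μ is a root of p.map
  set q : ℝ[X] := p.map (Int.castRingHom ℝ) with hq
  have hqdeg : q.natDegree = N := by rw [hq, hmonic.natDegree_map, hdeg]
  have hroot : q.eval μ = 0 := by
    have h1 : q = M.charpoly := by
      rw [hq, ← Matrix.charpoly_map M₀ (Int.castRingHom ℝ)]
      congr 1
    rw [h1, Matrix.charpoly]
    have h2 : Polynomial.eval μ (M.charmatrix).det =
        ((M.charmatrix).map (Polynomial.evalRingHom μ)).det := by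
      rw [show Polynomial.eval μ (M.charmatrix).det =
        (Polynomial.evalRingHom μ) (M.charmatrix).det from rfl, RingHom.map_det,
        RingHom.mapMatrix_apply]
    rw [h2]
    rw [← Matrix.exists_mulVec_eq_zero_iff]
    refine ⟨v, hv, ?_⟩
    have hA : (M.charmatrix).map (Polynomial.evalRingHom μ) = μ • (1 : Matrix (Fin N) (Fin N) ℝ) - M := by
      ext i j
      by_cases h : i = j
      · subst h
        simp [Matrix.charmatrix_apply_eq, Matrix.map_apply, Matrix.one_apply]
      · simp [Matrix.charmatrix_apply_ne _ _ _ h, Matrix.map_apply, Matrix.one_apply, h]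
    rw [hA, Matrix.sub_mulVec, Matrix.smul_mulVec, Matrix.one_mulVec, heig, sub_self]
  -- coefficients
  set a : ℕ → ℝ := fun i => ((p.coeff i : ℤ) : ℝ) with ha
  have hqcoeff : ∀ i, q.coeff i = a i := fun i => by
    rw [hq, Polynomial.coeff_map]; rfl
  have hsum : ∑ i ∈ Finset.range (N + 1), a i * μ ^ i = 0 := by
    have h := Polynomial.eval_eq_sum_range (p := q) (x := μ)
    rw [hroot, hqdeg] at h
    calc ∑ i ∈ Finset.range (N + 1), a i * μ ^ i
        = ∑ i ∈ Finset.range (N + 1), q.coeff i * μ ^ i :=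
          Finset.sum_congr rfl fun i _ => by rw [hqcoeff]
      _ = 0 := h.symm
  have ha0 : ∀ i < k, a i = 0 := by
    intro i hik
    rw [ha]
    simp [Polynomial.coeff_eq_zero_of_lt_natTrailingDegree hik]
  have hsplit : a k * μ ^ k = -(∑ i ∈ Finset.Ico (k+1) (N+1), a i * μ ^ i) := by
    have e1 : ∑ i ∈ Finset.range (N + 1), a i * μ ^ i =
        (∑ i ∈ Finset.Ico 0 k, a i * μ ^ i) + ∑ i ∈ Finset.Ico k (N+1), a i * μ ^ i := by
      rw [Finset.range_eq_Ico]
      exact (Finset.sum_Ico_consecutive _ (Nat.zero_le k) (by omega)).symm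
    have e2 : ∑ i ∈ Finset.Ico 0 k, a i * μ ^ i = 0 :=
      Finset.sum_eq_zero fun i hi => by
        rw [ha0 i (Finset.mem_Ico.mp hi).2, zero_mul]
    have e3 : ∑ i ∈ Finset.Ico k (N+1), a i * μ ^ i =
        a k * μ ^ k + ∑ i ∈ Finset.Ico (k+1) (N+1), a i * μ ^ i :=
      Finset.sum_eq_sum_Ico_succ_bot (by omega) _
    rw [e1, e2, e3, zero_add] at hsum
    linarith
  -- the bound
  by_contra hcon
  push_neg at hcon
  set t := |μ| with htdef
  have ht0 : 0 < t := abs_pos.mpr hμ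
  set P : ℝ := (B : ℝ) * (N : ℝ) with hP
  have hB1 : (1 : ℝ) ≤ (B : ℝ) := by exact_mod_cast hB
  have hN1 : (1 : ℝ) ≤ (N : ℝ) := by exact_mod_cast hN
  have hP1 : 1 ≤ P := by nlinarith
  have hP0 : 0 < P := by linarith
  have hPN1 : (1:ℝ) ≤ P ^ N := one_le_pow₀ hP1
  have ht1 : t ≤ 1 := by
    have : (P ^ N)⁻¹ ≤ 1 := inv_le_one_of_one_le₀ hPN1
    linarith [hcon]
  have hcoeff : ∀ i, i ≤ N → |a i| ≤ P ^ (N - i) := by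
    intro i hi
    have h := aux_charpoly_coeff N B hB M₀ hbnd₀ i hi
    rw [ha]
    rw [← Int.cast_abs]
    calc ((|p.coeff i| : ℤ) : ℝ) ≤ (((N : ℤ) * B) ^ (N - i) : ℤ) := by exact_mod_cast h
      _ = P ^ (N - i) := by push_cast [hP]; ring
  have hak1' : (1 : ℝ) ≤ |a k| := by
    rw [ha, ← Int.cast_abs]
    exact_mod_cast hak1
  have hchain : t ^ k ≤ ∑ i ∈ Finset.Ico (k+1) (N+1), P ^ (N - i) * t ^ i := by
    calc t ^ k = 1 * t ^ k := (one_mul _).symm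
      _ ≤ |a k| * t ^ k := by
          exact mul_le_mul_of_nonneg_right hak1' (pow_nonneg (abs_nonneg μ) k)
      _ = |a k * μ ^ k| := by rw [abs_mul, abs_pow]
      _ = |∑ i ∈ Finset.Ico (k+1) (N+1), a i * μ ^ i| := by rw [hsplit, abs_neg]
      _ ≤ ∑ i ∈ Finset.Ico (k+1) (N+1), |a i * μ ^ i| := Finset.abs_sum_le_sum_abs _ _
      _ ≤ ∑ i ∈ Finset.Ico (k+1) (N+1), P ^ (N - i) * t ^ i := by
          refine Finset.sum_le_sum fun i hi => ?_
          have hiN : i ≤ N := by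
            have := (Finset.mem_Ico.mp hi).2; omega
          rw [abs_mul, abs_pow]
          exact mul_le_mul_of_nonneg_right (hcoeff i hiN) (pow_nonneg (abs_nonneg μ) i)
  have hterm : ∀ i ∈ Finset.Ico (k+1) (N+1), P ^ (N - i) * t ^ i ≤ P ^ (N - 1) * t ^ (k+1) := by
    intro i hi
    obtain ⟨hi1, hi2⟩ := Finset.mem_Ico.mp hi
    have h1 : P ^ (N - i) ≤ P ^ (N - 1) := pow_le_pow_right₀ hP1 (by omega)
    have h2 : t ^ i ≤ t ^ (k+1) := pow_le_pow_of_le_one (le_of_lt ht0) ht1 hi1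
    exact mul_le_mul h1 h2 (pow_nonneg (le_of_lt ht0) _) (pow_nonneg (by linarith) _)
  have hsum2 : ∑ i ∈ Finset.Ico (k+1) (N+1), P ^ (N - i) * t ^ i ≤
      (N : ℝ) * (P ^ (N - 1) * t ^ (k+1)) := by
    calc ∑ i ∈ Finset.Ico (k+1) (N+1), P ^ (N - i) * t ^ i
        ≤ ∑ _i ∈ Finset.Ico (k+1) (N+1), P ^ (N - 1) * t ^ (k+1) :=
          Finset.sum_le_sum hterm
      _ = ((N - k : ℕ) : ℝ) * (P ^ (N - 1) * t ^ (k+1)) := by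
          rw [Finset.sum_const, Nat.card_Ico, nsmul_eq_mul]
          congr 2
          omega
      _ ≤ (N : ℝ) * (P ^ (N - 1) * t ^ (k+1)) := by
          refine mul_le_mul_of_nonneg_right ?_ ?_
          · exact_mod_cast Nat.sub_le N k
          · positivity
  have hfinal : (N : ℝ) * (P ^ (N - 1) * t ^ (k+1)) < t ^ k := by
    have hNP : (N : ℝ) * P ^ (N - 1) ≤ P ^ N := by
      have hNleP : (N : ℝ) ≤ P := by nlinarith
      calc (N : ℝ) * P ^ (N - 1) ≤ P * P ^ (N - 1) :=
            mul_le_mul_of_nonneg_right hNleP (by positivity)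
        _ = P ^ N := by
            rw [← pow_succ']
            congr 1
            omega
    have hstep : (N : ℝ) * P ^ (N - 1) * t < 1 := by
      have h1 : (N : ℝ) * P ^ (N - 1) * t < (N : ℝ) * P ^ (N - 1) * (P ^ N)⁻¹ := by
        refine mul_lt_mul_of_pos_left hcon ?_
        positivity
      have h2 : (N : ℝ) * P ^ (N - 1) * (P ^ N)⁻¹ ≤ P ^ N * (P ^ N)⁻¹ :=
        mul_le_mul_of_nonneg_right hNP (by positivity)
      have h3 : P ^ N * (P ^ N)⁻¹ = 1 := mul_inv_cancel₀ (by positivity)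
      linarith
    calc (N : ℝ) * (P ^ (N - 1) * t ^ (k+1)) = ((N : ℝ) * P ^ (N - 1) * t) * t ^ k := by ring
      _ < 1 * t ^ k := mul_lt_mul_of_pos_right hstep (by positivity)
      _ = t ^ k := one_mul _
  have : t ^ k < t ^ k := lt_of_le_of_lt (hchain.trans hsum2) hfinal
  exact lt_irrefl _ this
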